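/- Let V be a vertex algebra and M a subspace with C₂(V) ⊆ M. Then for a ∈ V: (1) a ∈ r_{0,-1}(M) iff a + C₂(V) ∈ r(M/C₂(V)); (2) a ∈ sr_{0,-1}(M) iff a + C₂(V) ∈ sr(M/C₂(V)). Consequently, M is a MZ_{0,-1}-subspace of V if and only if M/C₂(V) is a Mathieu-Zhao subspace of the commutative associative algebra V/C₂(V). -/

import Mathlib

open scoped BigOperators

noncomputable section

/-- The generalized binomial coefficient `p choose i` for `p : ℤ`, as a complex number. -/
def zchoose (p : ℤ) (i : ℕ) : ℂ :=
  (∏ j ∈ Finset.range i, ((p : ℂ) - (j : ℂ))) / (i.factorial : ℂ)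

/-- A vertex algebra over `ℂ`: a bilinear system of modes `u ↦ u_n`, a vacuum vector `𝟙`,
truncation, vacuum/creation axioms and the Borcherds (Jacobi) identity. -/
structure VertexAlgebra (V : Type) [AddCommGroup V] [Module ℂ V] where
  mode : V → ℤ → V → V
  one : V
  mode_add_left : ∀ (u v : V) (n : ℤ) (w : V), mode (u + v) n w = mode u n w + mode v n w
  mode_smul_left : ∀ (c : ℂ) (u : V) (n : ℤ) (w : V), mode (c • u) n w = c • mode u n w
  mode_add_right : ∀ (u : V) (n : ℤ) (v w : V), mode u n (v + w) = mode u n v + mode u n w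
  mode_smul_right : ∀ (u : V) (n : ℤ) (c : ℂ) (v : V), mode u n (c • v) = c • mode u n v
  trunc : ∀ u v : V, ∃ N : ℤ, ∀ n ≥ N, mode u n v = 0
  vacuum_left : ∀ (n : ℤ) (v : V), mode one n v = if n = -1 then v else 0
  creation_nonneg : ∀ (u : V) (n : ℤ), 0 ≤ n → mode u n one = 0
  creation : ∀ u : V, mode u (-1) one = u
  borcherds : ∀ (u v w : V) (p q r : ℤ),
    ∑ᶠ i : ℕ, zchoose p i • mode (mode u (r + i) v) (p + q - i) w =
      ∑ᶠ i : ℕ, ((-1 : ℂ) ^ i * zchoose r i) •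
        (mode u (p + r - i) (mode v (q + i) w) -
          ((-1 : ℂ) ^ r) • mode v (q + r - i) (mode u (p + i) w))

/-- A list of mode indices all equal to `0` or `-1`. -/
def GoodIdx (ns : List ℤ) : Prop := ∀ n ∈ ns, n = 0 ∨ n = -1

namespace VertexAlgebra

variable {V : Type} [AddCommGroup V] [Module ℂ V] (VA : VertexAlgebra V)

/-- The translation operator `𝒟 v = v_{-2} 𝟙`. -/
def D (v : V) : V := VA.mode v (-2) VA.one

/-- `C₂(V) = span_ℂ { u_{-2} v }`. -/
def C2 : Submodule ℂ V := Submodule.span ℂ {w : V | ∃ u v : V, w = VA.mode u (-2) v}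

/-- `Cₙ(V) = span_ℂ { u_{-n} v }`. -/
def Cn (n : ℕ) : Submodule ℂ V :=
  Submodule.span ℂ {w : V | ∃ u v : V, w = VA.mode u (-(n : ℤ)) v}


/-- The iterated word `a_{n₁} a_{n₂} ⋯ a_{n_t} a`. -/
def word (a : V) (ns : List ℤ) : V := ns.foldr (fun n acc => VA.mode a n acc) a

/-- The radical `r_{0,-1}(M)` of a subspace `M` with respect to the 0-th and (-1)-th products. -/
def rad (M : Set V) : Set V :=
  {v : V | ∃ m : ℕ, ∀ ns : List ℤ, GoodIdx ns → m ≤ ns.length → VA.word v ns ∈ M}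

/-- The left-strong radical `lsr_{0,-1}(M)`. -/
def lsrad (M : Set V) : Set V :=
  {v : V | ∀ b : V, ∃ m : ℕ, ∀ (ns : List ℤ) (s : ℤ), GoodIdx ns → m ≤ ns.length →
    (s = 0 ∨ s = -1) → VA.mode b s (VA.word v ns) ∈ M}

/-- The right-strong radical `rsr_{0,-1}(M)`. -/
def rsrad (M : Set V) : Set V :=
  {v : V | ∀ w : V, ∃ m : ℕ, ∀ (ns : List ℤ) (s : ℤ), GoodIdx ns → m ≤ ns.length →
    (s = 0 ∨ s = -1) → VA.mode (VA.word v ns) s w ∈ M}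

/-- The strong radical `sr_{0,-1}(M) = lsr_{0,-1}(M) ∩ rsr_{0,-1}(M)`. -/
def srad (M : Set V) : Set V := VA.lsrad M ∩ VA.rsrad M

/-- `M` is a Mathieu-Zhao subspace of `V` with respect to the 0-th and (-1)-th products. -/
def IsMZ (M : Set V) : Prop := VA.rad M = VA.srad M

/-- A (two-sided) ideal of a vertex algebra. -/
def IsIdeal (I : Submodule ℂ V) : Prop :=
  ∀ (v w : V) (n : ℤ), w ∈ I → VA.mode v n w ∈ I ∧ VA.mode w n v ∈ I

/-- `t`-th power of `a` under the (-1)-th product: `a_{-1}(a_{-1}(⋯ a))`, with `pow a 0 = 𝟙`. -/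
def pow (a : V) (t : ℕ) : V :=
  Nat.rec VA.one (fun _ acc => VA.mode a (-1) acc) t

end VertexAlgebra

/-- A homomorphism of vertex algebras: a linear map preserving all modes and the vacuum. -/
def VertexAlgebra.IsHom {V W : Type} [AddCommGroup V] [Module ℂ V] [AddCommGroup W]
    [Module ℂ W] (VA : VertexAlgebra V) (WA : VertexAlgebra W) (f : V →ₗ[ℂ] W) : Prop :=
  f VA.one = WA.one ∧ ∀ (u v : V) (n : ℤ), f (VA.mode u n v) = WA.mode (f u) n (f v)

/-- A vertex operator algebra: a `ℤ`-graded vertex algebra with finite-dimensional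
pieces, grading bounded below, and a conformal vector `ω` whose modes `L(n) = ω_{n+1}`
satisfy the Virasoro relations, give the grading by `L(0)`, and realize `L(-1) = 𝒟`. -/
structure VertexOperatorAlgebra (V : Type) [AddCommGroup V] [Module ℂ V]
    extends VertexAlgebra V where
  grade : ℤ → Submodule ℂ V
  internal : DirectSum.IsInternal grade
  one_mem : one ∈ grade 0
  mode_grade : ∀ {k m n : ℤ} {u w : V}, u ∈ grade k → w ∈ grade n →
    mode u m w ∈ grade (k + n - m - 1)
  fin_dim : ∀ n : ℤ, FiniteDimensional ℂ (grade n)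
  bounded_below : ∃ n₀ : ℤ, ∀ n < n₀, grade n = ⊥
  omega : V
  omega_mem : omega ∈ grade 2
  central_charge : ℂ
  virasoro : ∀ (m n : ℤ) (v : V),
    mode omega (m + 1) (mode omega (n + 1) v) - mode omega (n + 1) (mode omega (m + 1) v) =
      ((m : ℂ) - (n : ℂ)) • mode omega (m + n + 1) v +
        (if m + n = 0 then (((m : ℂ) ^ 3 - (m : ℂ)) / 12) * central_charge else 0) • v
  L0_grading : ∀ (n : ℤ) (v : V), v ∈ grade n → mode omega 1 v = (n : ℂ) • v
  L_neg1 : ∀ v : V, mode omega 0 v = mode v (-2) one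

section Aux

theorem zchoose_zero' (p : ℤ) : zchoose p 0 = 1 := by simp [zchoose]

theorem zchoose_zero_succ (i : ℕ) : zchoose 0 (i + 1) = 0 := by
  have h0 : (((0:ℤ):ℂ) - ((0:ℕ):ℂ)) = 0 := by norm_num
  rw [zchoose, Finset.prod_eq_zero (Finset.mem_range.2 (Nat.succ_pos i)) h0, zero_div]

theorem prod_neg2 : ∀ i : ℕ,
    (∏ j ∈ Finset.range i, (((-2:ℤ):ℂ) - (j:ℂ))) = (-1:ℂ)^i * ((i+1).factorial : ℂ)
  | 0 => by simp
  | (i+1) => by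
    rw [Finset.prod_range_succ, prod_neg2 i]
    have h : (((-2:ℤ):ℂ) - (i:ℂ)) = -((i:ℂ)+2) := by push_cast; ring
    rw [h, Nat.factorial_succ (i+1)]
    push_cast
    ring

theorem zchoose_neg2 (i : ℕ) : zchoose (-2) i = (-1:ℂ)^i * ((i:ℂ)+1) := by
  rw [zchoose, prod_neg2 i, Nat.factorial_succ]
  have hfac : ((i.factorial : ℂ)) ≠ 0 := Nat.cast_ne_zero.2 i.factorial_ne_zero
  push_cast
  field_simp

theorem finsum_mem_submodule {V : Type} [AddCommGroup V] [Module ℂ V]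
    {p : Submodule ℂ V} {f : ℕ → V} (hf : ∀ i, f i ∈ p) : ∑ᶠ i, f i ∈ p := by
  by_cases h : (Function.support f).Finite
  · rw [finsum_eq_sum f h]
    exact Submodule.sum_mem _ fun i _ => hf i
  · rw [finsum_of_infinite_support h]
    exact p.zero_mem

namespace VertexAlgebra

variable {V : Type} [AddCommGroup V] [Module ℂ V] (VA : VertexAlgebra V)

/-- mode as a linear map in the right argument. -/
def modeR (u : V) (n : ℤ) : V →ₗ[ℂ] V where
  toFun w := VA.mode u n w
  map_add' v w := VA.mode_add_right u n v w
  map_smul' c v := VA.mode_smul_right u n c v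

/-- mode as a linear map in the left argument. -/
def modeL (n : ℤ) (w : V) : V →ₗ[ℂ] V where
  toFun u := VA.mode u n w
  map_add' u v := VA.mode_add_left u v n w
  map_smul' c u := VA.mode_smul_left c u n w

theorem mode_zero_right (u : V) (n : ℤ) : VA.mode u n 0 = 0 := (VA.modeR u n).map_zero

theorem mode_zero_left (n : ℤ) (w : V) : VA.mode 0 n w = 0 := (VA.modeL n w).map_zero

theorem commutator_formula (u v w : V) (p q : ℤ) :
    VA.mode u p (VA.mode v q w) - VA.mode v q (VA.mode u p w) =
      ∑ᶠ i : ℕ, zchoose p i • VA.mode (VA.mode u i v) (p + q - i) w := by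
  have h := VA.borcherds u v w p q 0
  have hL : (∑ᶠ i : ℕ, zchoose p i • VA.mode (VA.mode u ((0:ℤ) + i) v) (p + q - i) w)
      = ∑ᶠ i : ℕ, zchoose p i • VA.mode (VA.mode u i v) (p + q - i) w := by
    apply finsum_congr; intro i; rw [zero_add]
  have hR : (∑ᶠ i : ℕ, ((-1 : ℂ) ^ i * zchoose (0:ℤ) i) •
        (VA.mode u (p + 0 - i) (VA.mode v (q + i) w) -
          ((-1 : ℂ) ^ (0:ℤ)) • VA.mode v (q + 0 - i) (VA.mode u (p + i) w)))
      = VA.mode u p (VA.mode v q w) - VA.mode v q (VA.mode u p w) := by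
    rw [finsum_eq_single _ 0]
    · simp [zchoose_zero']
    · intro i hi
      obtain ⟨j, rfl⟩ := Nat.exists_eq_succ_of_ne_zero hi
      rw [zchoose_zero_succ, mul_zero, zero_smul]
  rw [hL, hR] at h
  exact h.symm

theorem iterate_formula (u v w : V) (r q : ℤ) :
    VA.mode (VA.mode u r v) q w =
      ∑ᶠ i : ℕ, ((-1 : ℂ) ^ i * zchoose r i) •
        (VA.mode u (r - i) (VA.mode v (q + i) w) -
          ((-1 : ℂ) ^ r) • VA.mode v (q + r - i) (VA.mode u i w)) := by
  have h := VA.borcherds u v w 0 q r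
  have hL : (∑ᶠ i : ℕ, zchoose (0:ℤ) i • VA.mode (VA.mode u (r + i) v) (0 + q - i) w)
      = VA.mode (VA.mode u r v) q w := by
    rw [finsum_eq_single _ 0]
    · simp [zchoose_zero']
    · intro i hi
      obtain ⟨j, rfl⟩ := Nat.exists_eq_succ_of_ne_zero hi
      rw [zchoose_zero_succ, zero_smul]
  have hR : ∀ i : ℕ, ((-1:ℂ)^i * zchoose r i) •
        (VA.mode u ((0:ℤ) + r - i) (VA.mode v (q + i) w) -
          ((-1:ℂ)^r) • VA.mode v (q + r - i) (VA.mode u ((0:ℤ) + i) w))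
      = ((-1:ℂ)^i * zchoose r i) •
        (VA.mode u (r - i) (VA.mode v (q + i) w) -
          ((-1:ℂ)^r) • VA.mode v (q + r - i) (VA.mode u i w)) := by
    intro i; rw [zero_add, zero_add]
  rw [hL, finsum_congr hR] at h
  exact h

theorem mem_C2_aux (k : ℕ) (x w : V) : VA.mode x (-2 - (k:ℤ)) w ∈ VA.C2 := by
  induction k generalizing x w with
  | zero =>
    simp only [Nat.cast_zero, sub_zero]
    exact Submodule.subset_span ⟨x, w, rfl⟩
  | succ k ih =>
    have h := VA.iterate_formula x VA.one w (-2) (-2 - (k:ℤ))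
    rw [finsum_eq_single _ (k+1)] at h
    · have h1 : VA.mode VA.one (-2 - (k:ℤ) + ((k+1 : ℕ):ℤ)) w = w := by
        rw [VA.vacuum_left, if_pos (by push_cast; ring)]
      have h2 : VA.mode VA.one (-2 - (k:ℤ) + -2 - ((k+1 : ℕ):ℤ)) (VA.mode x ((k+1 : ℕ):ℤ) w) = 0 := by
        rw [VA.vacuum_left, if_neg (by push_cast; omega)]
      rw [h1, h2, smul_zero, sub_zero] at h
      have hc : ((-1:ℂ)^(k+1) * zchoose (-2) (k+1)) = ((k:ℂ)+2) := by
        rw [zchoose_neg2]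
        have hm : (-1:ℂ)^(k+1) * (-1:ℂ)^(k+1) = 1 := by
          rw [← mul_pow]; norm_num
        push_cast
        calc (-1:ℂ)^(k+1) * ((-1:ℂ)^(k+1) * ((k:ℂ)+1+1))
            = ((-1:ℂ)^(k+1) * (-1:ℂ)^(k+1)) * ((k:ℂ)+1+1) := by ring
          _ = (k:ℂ)+2 := by rw [hm]; ring
      rw [hc] at h
      have hne : ((k:ℂ)+2) ≠ 0 := by
        have he : ((k:ℂ)+2) = ((k+2 : ℕ):ℂ) := by push_cast; ring
        rw [he]
        exact Nat.cast_ne_zero.2 (by omega)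
      have hx : ((k:ℂ)+2)⁻¹ • VA.mode (VA.mode x (-2) VA.one) (-2 - (k:ℤ)) w
          = VA.mode x ((-2:ℤ) - ((k+1:ℕ):ℤ)) w := (inv_smul_eq_iff₀ hne).2 h
      rw [← hx]
      exact Submodule.smul_mem _ _ (ih (VA.mode x (-2) VA.one) w)
    · intro i hi
      have h1 : VA.mode VA.one (-2 - (k:ℤ) + (i:ℤ)) w = 0 := by
        rw [VA.vacuum_left, if_neg (by omega)]
      have h2 : VA.mode VA.one (-2 - (k:ℤ) + -2 - (i:ℤ)) (VA.mode x (i:ℤ) w) = 0 := by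
        rw [VA.vacuum_left, if_neg (by omega)]
      rw [h1, h2, VA.mode_zero_right, smul_zero, sub_zero, smul_zero]

theorem mem_C2_of_le_neg_two (x w : V) (n : ℤ) (hn : n ≤ -2) : VA.mode x n w ∈ VA.C2 := by
  obtain ⟨k, rfl⟩ : ∃ k : ℕ, n = -2 - (k:ℤ) :=
    ⟨(-2 - n).toNat, by rw [Int.toNat_of_nonneg (by omega)]; ring⟩
  exact VA.mem_C2_aux k x w

theorem mode_mem_C2_left (u : V) (p : ℤ) (hp : p ≤ 0) {x : V} (hx : x ∈ VA.C2) :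
    VA.mode u p x ∈ VA.C2 := by
  induction hx using Submodule.span_induction with
  | mem y hy =>
    obtain ⟨s, t, rfl⟩ := hy
    have h := VA.commutator_formula u s t p (-2)
    have h2 : VA.mode u p (VA.mode s (-2) t) = (∑ᶠ i : ℕ, zchoose p i •
        VA.mode (VA.mode u i s) (p + -2 - i) t) + VA.mode s (-2) (VA.mode u p t) :=
      sub_eq_iff_eq_add.1 h
    rw [h2]
    refine Submodule.add_mem _ (finsum_mem_submodule fun i => Submodule.smul_mem _ _
      (VA.mem_C2_of_le_neg_two _ _ _ (by omega))) (Submodule.subset_span ⟨s, _, rfl⟩)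
  | zero => rw [VA.mode_zero_right]; exact VA.C2.zero_mem
  | add a b _ _ ha hb => rw [VA.mode_add_right]; exact Submodule.add_mem _ ha hb
  | smul c a _ ha => rw [VA.mode_smul_right]; exact Submodule.smul_mem _ _ ha

theorem mode_mem_C2_right (w : V) (q : ℤ) (hq : q ≤ 0) {x : V} (hx : x ∈ VA.C2) :
    VA.mode x q w ∈ VA.C2 := by
  induction hx using Submodule.span_induction with
  | mem y hy =>
    obtain ⟨s, t, rfl⟩ := hy
    rw [VA.iterate_formula]
    refine finsum_mem_submodule fun i => Submodule.smul_mem _ _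
      (Submodule.sub_mem _ (VA.mem_C2_of_le_neg_two _ _ _ (by omega))
        (Submodule.smul_mem _ _ (VA.mem_C2_of_le_neg_two _ _ _ (by omega))))
  | zero => rw [VA.mode_zero_left]; exact VA.C2.zero_mem
  | add a b _ _ ha hb => rw [VA.mode_add_left]; exact Submodule.add_mem _ ha hb
  | smul c a _ ha => rw [VA.mode_smul_left]; exact Submodule.smul_mem _ _ ha

end VertexAlgebra
end Aux
namespace VertexAlgebra

variable {V : Type} [AddCommGroup V] [Module ℂ V] (VA : VertexAlgebra V)

theorem comm_neg1_comp (u v w : V) :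
    VA.mode u (-1) (VA.mode v (-1) w) - VA.mode v (-1) (VA.mode u (-1) w) ∈ VA.C2 := by
  rw [VA.commutator_formula]
  exact finsum_mem_submodule fun i => Submodule.smul_mem _ _
    (VA.mem_C2_of_le_neg_two _ _ _ (by omega))

theorem skew_mem_C2 (u v : V) (r : ℤ) :
    VA.mode u (r - 1) v - ((-1:ℂ)^r) • VA.mode v (r - 1) u ∈ VA.C2 := by
  have h := VA.borcherds u v VA.one (-1) (-1) r
  have hR : (∑ᶠ i : ℕ, ((-1:ℂ)^i * zchoose r i) •
        (VA.mode u (-1 + r - i) (VA.mode v (-1 + i) VA.one) -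
          ((-1:ℂ)^r) • VA.mode v (-1 + r - i) (VA.mode u (-1 + i) VA.one)))
      = VA.mode u (r - 1) v - ((-1:ℂ)^r) • VA.mode v (r - 1) u := by
    rw [finsum_eq_single _ 0]
    · simp only [Nat.cast_zero, add_zero, sub_zero, pow_zero, zchoose_zero', one_mul, one_smul]
      rw [show (-1 : ℤ) + r = r - 1 from by ring, VA.creation, VA.creation]
    · intro i hi
      have hi' : 1 ≤ i := Nat.one_le_iff_ne_zero.2 hi
      have h1 : VA.mode v (-1 + (i:ℤ)) VA.one = 0 := VA.creation_nonneg _ _ (by omega)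
      have h2 : VA.mode u (-1 + (i:ℤ)) VA.one = 0 := VA.creation_nonneg _ _ (by omega)
      rw [h1, h2, VA.mode_zero_right, VA.mode_zero_right, smul_zero, sub_zero, smul_zero]
  rw [hR] at h
  rw [← h]
  exact finsum_mem_submodule fun i => Submodule.smul_mem _ _
    (VA.mem_C2_of_le_neg_two _ _ _ (by omega))

theorem comm_neg1_mem (u v : V) : VA.mode u (-1) v - VA.mode v (-1) u ∈ VA.C2 := by
  have h := VA.skew_mem_C2 u v 0
  norm_num at h
  exact h

theorem anticomm_zero_mem (u v : V) : VA.mode u 0 v + VA.mode v 0 u ∈ VA.C2 := by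
  have h := VA.skew_mem_C2 u v 1
  norm_num [sub_neg_eq_add] at h
  exact h

theorem mode_zero_self_mem (a : V) : VA.mode a 0 a ∈ VA.C2 := by
  have h := VA.anticomm_zero_mem a a
  have h2 : VA.mode a 0 a = (2:ℂ)⁻¹ • (VA.mode a 0 a + VA.mode a 0 a) := by
    rw [← two_smul ℂ, smul_smul]
    norm_num
  rw [h2]
  exact Submodule.smul_mem _ _ h

theorem deriv_exact (b a y : V) :
    VA.mode b 0 (VA.mode a (-1) y) - VA.mode a (-1) (VA.mode b 0 y)
      = VA.mode (VA.mode b 0 a) (-1) y := by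
  rw [VA.commutator_formula]
  rw [finsum_eq_single _ 0]
  · norm_num [zchoose_zero']
  · intro i hi
    obtain ⟨j, rfl⟩ := Nat.exists_eq_succ_of_ne_zero hi
    rw [zchoose_zero_succ, zero_smul]

theorem deriv_pow (b a : V) (t : ℕ) :
    VA.mode b 0 (VA.pow a (t+1)) - ((t:ℂ)+1) • VA.mode (VA.mode b 0 a) (-1) (VA.pow a t)
      ∈ VA.C2 := by
  induction t with
  | zero =>
    have h1 : VA.pow a (0+1) = a := VA.creation a
    have h2 : VA.mode (VA.mode b 0 a) (-1) (VA.pow a 0) = VA.mode b 0 a := VA.creation _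
    rw [h1, h2]
    simp
  | succ t ih =>
    set y := VA.pow a (t+1) with hy
    set z := VA.mode (VA.mode b 0 a) (-1) (VA.pow a t) with hz
    have E1 : VA.mode b 0 (VA.pow a (t+2)) =
        VA.mode (VA.mode b 0 a) (-1) y + VA.mode a (-1) (VA.mode b 0 y) := by
      have := VA.deriv_exact b a y
      show VA.mode b 0 (VA.mode a (-1) y) = _
      rw [← this]; abel
    have F2 : VA.mode a (-1) (VA.mode b 0 y) - ((t:ℂ)+1) • VA.mode a (-1) z ∈ VA.C2 := by
      have hmap : VA.mode a (-1) (VA.mode b 0 y - ((t:ℂ)+1) • z)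
          = VA.mode a (-1) (VA.mode b 0 y) - ((t:ℂ)+1) • VA.mode a (-1) z := by
        exact (VA.modeR a (-1)).map_sub _ _ |>.trans (by rw [(VA.modeR a (-1)).map_smul]; rfl)
      rw [← hmap]
      exact VA.mode_mem_C2_left a (-1) (by norm_num) ih
    have F3 : VA.mode a (-1) z - VA.mode (VA.mode b 0 a) (-1) y ∈ VA.C2 := by
      have := VA.comm_neg1_comp a (VA.mode b 0 a) (VA.pow a t)
      exact this
    have key : VA.mode b 0 (VA.pow a (t+2)) - (((t:ℕ)+1:ℂ)+1) • VA.mode (VA.mode b 0 a) (-1) y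
        = (VA.mode a (-1) (VA.mode b 0 y) - ((t:ℂ)+1) • VA.mode a (-1) z)
          + ((t:ℂ)+1) • (VA.mode a (-1) z - VA.mode (VA.mode b 0 a) (-1) y) := by
      rw [E1]
      module
    have goal2 : VA.mode b 0 (VA.pow a (t+1+1)) -
        ((((t+1:ℕ)):ℂ)+1) • VA.mode (VA.mode b 0 a) (-1) (VA.pow a (t+1)) =
        VA.mode b 0 (VA.pow a (t+2)) - (((t:ℕ)+1:ℂ)+1) • VA.mode (VA.mode b 0 a) (-1) y := by
      push_cast
      rfl
    rw [goal2, key]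
    exact Submodule.add_mem _ F2 (Submodule.smul_mem _ _ F3)

theorem word_replicate (a : V) (k : ℕ) :
    VA.word a (List.replicate k (-1)) = VA.pow a (k+1) := by
  induction k with
  | zero => exact (VA.creation a).symm
  | succ k ih =>
    show VA.mode a (-1) (VA.word a (List.replicate k (-1))) = VA.mode a (-1) (VA.pow a (k+1))
    rw [ih]

theorem word_zero_mem_C2 (a : V) (ns : List ℤ) (hg : GoodIdx ns) (hmem : (0:ℤ) ∈ ns) :
    VA.word a ns ∈ VA.C2 := by
  revert hg hmem
  induction ns with
  | nil => intro _ hmem; simp at hmem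
  | cons n rest ih =>
    intro hg hmem
    have hrest : GoodIdx rest := fun m hm => hg m (List.mem_cons_of_mem _ hm)
    rcases hg n List.mem_cons_self with h0 | h1
    · subst h0
      show VA.mode a 0 (VA.word a rest) ∈ VA.C2
      by_cases hz : (0:ℤ) ∈ rest
      · exact VA.mode_mem_C2_left a 0 le_rfl (ih hrest hz)
      · have hrep : rest = List.replicate rest.length (-1) :=
          List.eq_replicate_of_mem (fun b hb => by
            rcases hrest b hb with h | h
            · exact absurd (h ▸ hb) hz
            · exact h)
        rw [hrep, VA.word_replicate]
        have hd := VA.deriv_pow a a rest.length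
        have hz2 : ((rest.length:ℂ)+1) • VA.mode (VA.mode a 0 a) (-1) (VA.pow a rest.length)
            ∈ VA.C2 :=
          Submodule.smul_mem _ _
            (VA.mode_mem_C2_right _ (-1) (by norm_num) (VA.mode_zero_self_mem a))
        have := Submodule.add_mem _ hd hz2
        simpa using this
    · subst h1
      have hz : (0:ℤ) ∈ rest := by
        rcases List.mem_cons.1 hmem with h | h
        · exact absurd h (by norm_num)
        · exact h
      exact VA.mode_mem_C2_left a (-1) (by norm_num)
        (ih hrest hz)

end VertexAlgebra
/-- Let `M ⊇ C₂(V)`. Since the commutative algebra `V/C₂(V)` has product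
induced by the (-1)-th product and, for `M ⊇ C₂(V)`, `x + C₂(V) ∈ M/C₂(V) ↔ x ∈ M`, the
conditions `a + C₂(V) ∈ r(M/C₂(V))`, `a + C₂(V) ∈ sr(M/C₂(V))`, and `M/C₂(V)` being a
Mathieu-Zhao subspace of `V/C₂(V)` are expressed below via representatives and the
(-1)-power `pow`. Then: (1) `a ∈ r_{0,-1}(M)` iff `a + C₂(V) ∈ r(M/C₂(V))`;
(2) `a ∈ sr_{0,-1}(M)` iff `a + C₂(V) ∈ sr(M/C₂(V))`; consequently `M` is a
MZ_{0,-1}-subspace of `V` iff `M/C₂(V)` is a Mathieu-Zhao subspace of `V/C₂(V)`. -/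
theorem stmt13 {V : Type} [AddCommGroup V] [Module ℂ V] (VA : VertexAlgebra V)
    (M : Submodule ℂ V) (hC2 : VA.C2 ≤ M) :
    (∀ a : V, a ∈ VA.rad (M : Set V) ↔
      ∃ m : ℕ, 1 ≤ m ∧ ∀ t : ℕ, m ≤ t → VA.pow a t ∈ M) ∧
    (∀ a : V, a ∈ VA.srad (M : Set V) ↔
      ∀ b : V, ∃ m : ℕ, 1 ≤ m ∧ ∀ t : ℕ, m ≤ t → VA.mode b (-1) (VA.pow a t) ∈ M) ∧
    (VA.IsMZ (M : Set V) ↔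
      ∀ a : V, (∃ m : ℕ, 1 ≤ m ∧ ∀ t : ℕ, m ≤ t → VA.pow a t ∈ M) ↔
        (∀ b : V, ∃ m : ℕ, 1 ≤ m ∧ ∀ t : ℕ, m ≤ t → VA.mode b (-1) (VA.pow a t) ∈ M)) := by
  have hgood : ∀ k : ℕ, GoodIdx (List.replicate k (-1 : ℤ)) :=
    fun k n hn => Or.inr (List.eq_of_mem_replicate hn)
  have hpoww : ∀ (a : V) (t : ℕ), 1 ≤ t → VA.pow a t = VA.word a (List.replicate (t-1) (-1)) := by
    intro a t ht
    rw [VA.word_replicate]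
    congr 1
    omega
  have hrepl : ∀ ns : List ℤ, GoodIdx ns → (0:ℤ) ∉ ns →
      ns = List.replicate ns.length (-1) := by
    intro ns hg hz
    refine List.eq_replicate_of_mem fun b hb => ?_
    rcases hg b hb with h | h
    · exact absurd (h ▸ hb) hz
    · exact h
  have hrad : ∀ a : V, a ∈ VA.rad (M : Set V) ↔
      ∃ m : ℕ, 1 ≤ m ∧ ∀ t : ℕ, m ≤ t → VA.pow a t ∈ M := by
    intro a
    constructor
    · rintro ⟨m, hm⟩
      refine ⟨m + 1, by omega, fun t ht => ?_⟩
      rw [hpoww a t (by omega)]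
      exact hm _ (hgood _) (by rw [List.length_replicate]; omega)
    · rintro ⟨m, hm1, hm⟩
      refine ⟨m, fun ns hg hlen => ?_⟩
      by_cases hz : (0:ℤ) ∈ ns
      · exact hC2 (VA.word_zero_mem_C2 a ns hg hz)
      · rw [hrepl ns hg hz, VA.word_replicate]
        exact hm _ (by omega)
  -- strong radical characterization
  have hsrad : ∀ a : V, a ∈ VA.srad (M : Set V) ↔
      ∀ b : V, ∃ m : ℕ, 1 ≤ m ∧ ∀ t : ℕ, m ≤ t → VA.mode b (-1) (VA.pow a t) ∈ M := by
    intro a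
    constructor
    · rintro ⟨hl, _⟩ b
      obtain ⟨m, hm⟩ := hl b
      refine ⟨m + 1, by omega, fun t ht => ?_⟩
      rw [hpoww a t (by omega)]
      exact hm _ (-1) (hgood _) (by rw [List.length_replicate]; omega) (Or.inr rfl)
    · intro hQ
      have hQ0 : ∀ b : V, ∃ m : ℕ, 1 ≤ m ∧ ∀ t : ℕ, m ≤ t → VA.mode b 0 (VA.pow a t) ∈ M := by
        intro b
        obtain ⟨m, hm1, hm⟩ := hQ (VA.mode b 0 a)
        refine ⟨m + 1, by omega, fun t ht => ?_⟩
        obtain ⟨k, rfl⟩ : ∃ k, t = k + 1 := ⟨t - 1, by omega⟩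
        have hd := VA.deriv_pow b a k
        have h2 : ((k:ℂ)+1) • VA.mode (VA.mode b 0 a) (-1) (VA.pow a k) ∈ M :=
          M.smul_mem _ (hm k (by omega))
        have h3 := M.add_mem (hC2 hd) h2
        simpa using h3
      constructor
      · -- lsrad
        intro b
        obtain ⟨m1, _, hm1⟩ := hQ b
        obtain ⟨m2, _, hm2⟩ := hQ0 b
        refine ⟨m1 + m2, fun ns s hg hlen hs => ?_⟩
        by_cases hz : (0:ℤ) ∈ ns
        · exact hC2 (VA.mode_mem_C2_left b s (by rcases hs with h | h <;> omega)
            (VA.word_zero_mem_C2 a ns hg hz))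
        · rw [hrepl ns hg hz, VA.word_replicate]
          rcases hs with h0 | h1
          · subst h0; exact hm2 _ (by omega)
          · subst h1; exact hm1 _ (by omega)
      · -- rsrad
        intro w
        obtain ⟨m1, _, hm1⟩ := hQ w
        obtain ⟨m2, _, hm2⟩ := hQ0 w
        refine ⟨m1 + m2, fun ns s hg hlen hs => ?_⟩
        by_cases hz : (0:ℤ) ∈ ns
        · exact hC2 (VA.mode_mem_C2_right w s (by rcases hs with h | h <;> omega)
            (VA.word_zero_mem_C2 a ns hg hz))
        · rw [hrepl ns hg hz, VA.word_replicate]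
          rcases hs with h0 | h1
          · subst h0
            have hsk := VA.anticomm_zero_mem (VA.pow a (ns.length + 1)) w
            have h2 : VA.mode w 0 (VA.pow a (ns.length + 1)) ∈ M := hm2 _ (by omega)
            have he : VA.mode (VA.pow a (ns.length + 1)) 0 w =
                (VA.mode (VA.pow a (ns.length + 1)) 0 w + VA.mode w 0 (VA.pow a (ns.length + 1)))
                  - VA.mode w 0 (VA.pow a (ns.length + 1)) := by abel
            rw [he]
            exact M.sub_mem (hC2 hsk) h2
          · subst h1
            have hsk := VA.comm_neg1_mem (VA.pow a (ns.length + 1)) w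
            have h2 : VA.mode w (-1) (VA.pow a (ns.length + 1)) ∈ M := hm1 _ (by omega)
            have he : VA.mode (VA.pow a (ns.length + 1)) (-1) w =
                (VA.mode (VA.pow a (ns.length + 1)) (-1) w
                  - VA.mode w (-1) (VA.pow a (ns.length + 1)))
                  + VA.mode w (-1) (VA.pow a (ns.length + 1)) := by abel
            rw [he]
            exact M.add_mem (hC2 hsk) h2
  refine ⟨hrad, hsrad, ?_⟩
  unfold VertexAlgebra.IsMZ
  rw [Set.ext_iff]
  exact forall_congr' fun a => iff_congr (hrad a) (hsrad a)
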